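/- Let pi in L_{n+1} and write pi = sigma u with sigma in L_{n+1} having des_A(sigma) = 0 and u = sigma^{-1} pi in A_{n+1}. Then ell_L(pi) = ell_A(u) + sum of the elements of Neg(pi^{-1}). -/

import Mathlib

open Equiv Finset

namespace SignedEven

/-- Type-B Coxeter generators inside `Equiv.Perm ℤ`:
`s 0` is the sign change in the first position, `s i = (i, i+1)(-i, -(i+1))`. -/
def s (i : ℕ) : Equiv.Perm ℤ :=
  if i = 0 then Equiv.swap 1 (-1)
  else Equiv.swap (i : ℤ) ((i : ℤ) + 1) * Equiv.swap (-(i : ℤ)) (-((i : ℤ) + 1))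

/-- Generators of the group of signed even permutations: `a 0 = s 0`, `a i = s 1 * s (i+1)`. -/
def a (i : ℕ) : Equiv.Perm ℤ := if i = 0 then s 0 else s 1 * s (i + 1)

/-- `σ` is a signed permutation on `{±1, …, ±n}` (an element of `B_n`). -/
def isB (n : ℕ) (σ : Equiv.Perm ℤ) : Prop :=
  (∀ i : ℤ, σ (-i) = -σ i) ∧ ∀ i : ℤ, (n : ℤ) < |i| → σ i = i

/-- `σ` is an (unsigned) permutation of `{1, …, n}` (an element of `S_n ⊆ B_n`). -/
def isS (n : ℕ) (σ : Equiv.Perm ℤ) : Prop := isB n σ ∧ ∀ i : ℤ, 0 < i → 0 < σ i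

/-- inversion number of the window `[σ(1), …, σ(n)]`. -/
noncomputable def invStat (n : ℕ) (σ : Equiv.Perm ℤ) : ℕ :=
  (((Finset.Icc (1 : ℤ) (n : ℤ)) ×ˢ (Finset.Icc (1 : ℤ) (n : ℤ))).filter
    (fun p => p.1 < p.2 ∧ σ p.2 < σ p.1)).card

/-- inversion number of the window of `|σ|`; its parity is the sign of `Abs σ`. -/
noncomputable def invAbs (n : ℕ) (σ : Equiv.Perm ℤ) : ℕ :=
  (((Finset.Icc (1 : ℤ) (n : ℤ)) ×ˢ (Finset.Icc (1 : ℤ) (n : ℤ))).filter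
    (fun p => p.1 < p.2 ∧ |σ p.2| < |σ p.1|)).card

/-- `σ ∈ L_n = C₂ ≀ A_n`: a signed permutation whose underlying permutation is even. -/
def isL (n : ℕ) (σ : Equiv.Perm ℤ) : Prop := isB n σ ∧ Even (invAbs n σ)

/-- `σ ∈ A_n`: an unsigned even permutation. -/
def isA (n : ℕ) (σ : Equiv.Perm ℤ) : Prop := isS n σ ∧ Even (invStat n σ)

/-- `Neg(σ) = {i ∈ [n] : σ(i) < 0}`. -/
noncomputable def negSet (n : ℕ) (σ : Equiv.Perm ℤ) : Finset ℤ :=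
  (Finset.Icc (1 : ℤ) (n : ℤ)).filter (fun i => σ i < 0)

/-- `σ ∈ D_n`: a signed permutation with an even number of negative window entries. -/
def isD (n : ℕ) (σ : Equiv.Perm ℤ) : Prop := isB n σ ∧ Even (negSet n σ).card

/-- the sum of the elements of `Neg(σ)`. -/
noncomputable def negSum (n : ℕ) (σ : Equiv.Perm ℤ) : ℤ := ∑ i ∈ negSet n σ, i

/-- `del_B(σ)`: the number of non-initial left-to-right minima of the window. -/
noncomputable def delB (n : ℕ) (σ : Equiv.Perm ℤ) : ℕ :=
  ((Finset.Icc (2 : ℤ) (n : ℤ)).filter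
    (fun j => ∀ i ∈ Finset.Icc (1 : ℤ) (n : ℤ), i < j → σ j < σ i)).card

/-- the Coxeter length of `σ ∈ B_n` with respect to `s 0, …, s (n-1)`. -/
noncomputable def ellB (n : ℕ) (σ : Equiv.Perm ℤ) : ℕ :=
  sInf {k | ∃ l : List ℕ, l.length = k ∧ (∀ i ∈ l, i < n) ∧ (l.map s).prod = σ}

/-- the `L`-length `ℓ_L(σ) = inv(σ) - del_B(σ) + Σ Neg(σ⁻¹)`. -/
noncomputable def ellL (n : ℕ) (σ : Equiv.Perm ℤ) : ℤ :=
  (invStat n σ : ℤ) - (delB n σ : ℤ) + negSum n σ⁻¹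

/-- the `A`-descent set of `π ∈ L_{n+1}`. -/
noncomputable def desASet (n : ℕ) (π : Equiv.Perm ℤ) : Finset ℕ :=
  (Finset.Icc 1 (n - 1)).filter (fun i => ellL (n + 1) (π * a i) ≤ ellL (n + 1) π)

/-- the `A`-descent number of `π ∈ L_{n+1}`. -/
noncomputable def desA (n : ℕ) (π : Equiv.Perm ℤ) : ℕ := (desASet n π).card

/-- the `S`-descent set of `σ ∈ B_n`. -/
def desSSet (n : ℕ) (σ : Equiv.Perm ℤ) : Finset ℕ :=
  (Finset.Icc 1 (n - 1)).filter (fun i => σ ((i : ℤ) + 1) < σ (i : ℤ))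

/-- `maj_B(σ)`. -/
def majB (n : ℕ) (σ : Equiv.Perm ℤ) : ℕ := ∑ i ∈ desSSet n σ, i

/-- `rmaj_{B_n}(σ)`. -/
def rmajB (n : ℕ) (σ : Equiv.Perm ℤ) : ℕ := ∑ i ∈ desSSet n σ, (n - i)

/-- `rmaj_{L_{n+1}}(π)`. -/
noncomputable def rmajL (n : ℕ) (π : Equiv.Perm ℤ) : ℕ := ∑ i ∈ desASet n π, (n - i)

/-- `nrmaj_{L_{n+1}}(π) = rmaj_{L_{n+1}}(π) + Σ Neg(π⁻¹)`. -/
noncomputable def nrmajL (n : ℕ) (π : Equiv.Perm ℤ) : ℤ := (rmajL n π : ℤ) + negSum (n + 1) π⁻¹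

/-- `s_j s_{j-1} ⋯ s_{j-k+1}` (k factors). -/
def rS (j k : ℕ) : Equiv.Perm ℤ := ((List.range k).map (fun t => s (j - t))).prod

/-- `R_j^S = {1, s_j, s_j s_{j-1}, …, s_j ⋯ s_1}`. -/
def RS (j : ℕ) : Set (Equiv.Perm ℤ) := {σ | ∃ k ≤ j, σ = rS j k}

/-- the word `s_j s_{j-1} ⋯` of length `k` running down to `s_0` and possibly back up. -/
def wordB (j k : ℕ) : List ℕ :=
  ((List.range (min k (j + 1))).map (fun t => j - t)) ++
    ((List.range (k - (j + 1))).map (fun t => t + 1))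

/-- the `k`-th element of `R_j^B`. -/
def rB (j k : ℕ) : Equiv.Perm ℤ := ((wordB j k).map s).prod

/-- `R_j^B = {1, s_j, …, s_j ⋯ s_1, s_j ⋯ s_1 s_0, s_j ⋯ s_1 s_0 s_1, …, s_j ⋯ s_1 s_0 s_1 ⋯ s_j}`. -/
def RB (j : ℕ) : Set (Equiv.Perm ℤ) := {σ | ∃ k ≤ 2 * j + 1, σ = rB j k}

/-- the `k`-th element of `R_j^A`: `a_j ⋯ a_{j-k+1}` for `k ≤ j`, and `a_j ⋯ a_2 a_1⁻¹` for `k = j+1`. -/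
def rA (j k : ℕ) : Equiv.Perm ℤ :=
  if k ≤ j then ((List.range k).map (fun t => a (j - t))).prod
  else ((List.range (j - 1)).map (fun t => a (j - t))).prod * (a 1)⁻¹

/-- `R_j^A = {1, a_j, a_j a_{j-1}, …, a_j ⋯ a_2 a_1, a_j ⋯ a_2 a_1⁻¹}`. -/
def RA (j : ℕ) : Set (Equiv.Perm ℤ) := {σ | ∃ k ≤ j + 1, σ = rA j k}

/-- `R_j^L`. -/
def RL (j : ℕ) : Set (Equiv.Perm ℤ) :=
  if j = 0 then {1, a 0, a 1 * a 0 * (a 1)⁻¹, a 0 * a 1 * a 0 * (a 1)⁻¹}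
  else RA j ∪ {σ | σ = rA j (j + 1) * a 0 ∨ σ = rA j (j + 1) * a 0 * (a 1)⁻¹ ∨
    ∃ m, 1 ≤ m ∧ m ≤ j ∧
      σ = rA j (j + 1) * a 0 * ((List.range m).map (fun t => a (t + 1))).prod}

lemma s_apply (j : ℕ) (hj : j ≠ 0) (z : ℤ) :
    s j z = if z = (j:ℤ) then (j:ℤ)+1 else if z = (j:ℤ)+1 then (j:ℤ)
      else if z = -(j:ℤ) then -((j:ℤ)+1) else if z = -((j:ℤ)+1) then -(j:ℤ) else z := by
  have hj1 : (1:ℤ) ≤ (j:ℤ) := by exact_mod_cast Nat.one_le_iff_ne_zero.mpr hj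
  simp only [s, if_neg hj, Equiv.Perm.mul_apply, Equiv.swap_apply_def]
  split_ifs <;> omega

lemma sval (j : ℕ) (hj : j ≠ 0) {x : ℤ} (hx : 1 ≤ x) :
    s j x = if x = (j:ℤ) then (j:ℤ)+1 else if x = (j:ℤ)+1 then (j:ℤ) else x := by
  have hj1 : (1:ℤ) ≤ (j:ℤ) := by exact_mod_cast Nat.one_le_iff_ne_zero.mpr hj
  rw [s_apply j hj]
  split_ifs <;> omega

lemma s_invol (j : ℕ) (hj : j ≠ 0) (z : ℤ) : s j (s j z) = z := by
  have hj1 : (1:ℤ) ≤ (j:ℤ) := by exact_mod_cast Nat.one_le_iff_ne_zero.mpr hj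
  rw [s_apply j hj, s_apply j hj]
  split_ifs <;> omega

lemma s_mul_self (j : ℕ) (hj : j ≠ 0) : s j * s j = 1 :=
  Equiv.ext fun z => s_invol j hj z

/-- sign preservation -/
def SP (v : Equiv.Perm ℤ) : Prop := ∀ z : ℤ, (0 < v z ↔ 0 < z) ∧ (v z < 0 ↔ z < 0)

lemma sp_s (j : ℕ) (hj : j ≠ 0) : SP (s j) := by
  have hj1 : (1:ℤ) ≤ (j:ℤ) := by exact_mod_cast Nat.one_le_iff_ne_zero.mpr hj
  intro z
  rw [s_apply j hj]
  split_ifs <;> omega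

lemma sp_mul {v w : Equiv.Perm ℤ} (hv : SP v) (hw : SP w) : SP (v * w) := by
  intro z
  have h1 := hv (w z)
  have h2 := hw z
  simp only [Equiv.Perm.mul_apply]
  exact ⟨h1.1.trans h2.1, h1.2.trans h2.2⟩

lemma perm_apply_inv_self (u : Equiv.Perm ℤ) (x : ℤ) : u (u⁻¹ x) = x :=
  (Equiv.eq_symm_apply u).mp rfl

lemma perm_inv_apply_self (u : Equiv.Perm ℤ) (x : ℤ) : u⁻¹ (u x) = x :=
  Equiv.Perm.inv_eq_iff_eq.mpr rfl

lemma sp_inv {v : Equiv.Perm ℤ} (hv : SP v) : SP v⁻¹ := by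
  intro z
  have h := hv (v⁻¹ z)
  rw [perm_apply_inv_self] at h
  exact ⟨h.1.symm, h.2.symm⟩

lemma sp_a (i : ℕ) (hi : i ≠ 0) : SP (a i) := by
  rw [a, if_neg hi]
  exact sp_mul (sp_s 1 one_ne_zero) (sp_s (i+1) (Nat.succ_ne_zero i))

lemma isB_abs_le {M : ℕ} {σ : Equiv.Perm ℤ} (h : isB M σ) {i : ℤ} (h1 : 1 ≤ i) (h2 : i ≤ M) :
    -(M:ℤ) ≤ σ i ∧ σ i ≤ M ∧ σ i ≠ 0 := by
  have hne : σ i ≠ 0 := by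
    intro h0
    have : σ (-i) = σ i := by rw [h.1, h0]; exact neg_zero
    have := σ.injective this
    omega
  have habs : ¬ (M:ℤ) < |σ i| := by
    intro hgt
    have := σ.injective (h.2 (σ i) hgt)
    rw [this] at hgt
    rw [abs_of_nonneg (by omega)] at hgt
    omega
  rcases abs_le.mp (not_lt.mp habs) with ⟨ha, hb⟩
  exact ⟨ha, hb, hne⟩

lemma isS_window {M : ℕ} {u : Equiv.Perm ℤ} (h : isS M u) {i : ℤ} (h1 : 1 ≤ i) (h2 : i ≤ M) :
    1 ≤ u i ∧ u i ≤ M := by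
  have := isB_abs_le h.1 h1 h2
  have := h.2 i (by omega)
  omega

lemma isS_inv {M : ℕ} {u : Equiv.Perm ℤ} (h : isS M u) : isS M u⁻¹ := by
  have hodd : ∀ i : ℤ, u⁻¹ (-i) = -u⁻¹ i := by
    intro i
    apply u.injective
    rw [perm_apply_inv_self, h.1.1, perm_apply_inv_self]
  have h0 : u 0 = 0 := by
    have := h.1.1 0
    rw [neg_zero] at this
    omega
  refine ⟨⟨hodd, ?_⟩, ?_⟩
  · intro i hi
    have := h.1.2 i hi
    calc u⁻¹ i = u⁻¹ (u i) := by rw [this]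
    _ = i := perm_inv_apply_self u i
  · intro i hi
    by_contra hle
    push_neg at hle
    rcases lt_or_eq_of_le hle with hlt | heq
    · have hx : 0 < -u⁻¹ i := by omega
      have := h.2 _ hx
      rw [h.1.1, perm_apply_inv_self] at this
      omega
    · have : u (u⁻¹ i) = u 0 := by rw [← heq]
      rw [perm_apply_inv_self, h0] at this
      omega


lemma negSum_mul {v : Equiv.Perm ℤ} (hv : SP v) (M : ℕ) (σ : Equiv.Perm ℤ) :
    negSum M (σ * v)⁻¹ = negSum M σ⁻¹ := by
  unfold negSum negSet
  congr 1
  apply Finset.filter_congr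
  intro i _
  simp only [mul_inv_rev, Equiv.Perm.mul_apply]
  exact (sp_inv hv (σ⁻¹ i)).2

section swap

variable (M : ℕ) (σ : Equiv.Perm ℤ) (j : ℕ)

lemma invStat_mul_s_lt (hj : j ≠ 0) (hjM : (j:ℤ) + 1 ≤ (M:ℤ))
    (hlt : σ (j:ℤ) < σ ((j:ℤ)+1)) :
    invStat M (σ * s j) = invStat M σ + 1 := by
  have hj1 : (1:ℤ) ≤ (j:ℤ) := by exact_mod_cast Nat.one_le_iff_ne_zero.mpr hj
  set jz : ℤ := (j:ℤ) with hjz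
  set t : ℤ → ℤ := fun x => s j x with htdef
  have ht : ∀ x : ℤ, 1 ≤ x → t x = if x = jz then jz+1 else if x = jz+1 then jz else x :=
    fun x hx => sval j hj hx
  have htt : ∀ x : ℤ, t (t x) = x := fun x => s_invol j hj x
  have htmem : ∀ x : ℤ, 1 ≤ x → x ≤ M → 1 ≤ t x ∧ t x ≤ M := by
    intro x h1 h2; rw [ht x h1]; split_ifs <;> omega
  set S1 := (((Finset.Icc (1 : ℤ) (M : ℤ)) ×ˢ (Finset.Icc (1 : ℤ) (M : ℤ))).filter
    (fun p => p.1 < p.2 ∧ (σ * s j) p.2 < (σ * s j) p.1)) with hS1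
  set S2 := (((Finset.Icc (1 : ℤ) (M : ℤ)) ×ˢ (Finset.Icc (1 : ℤ) (M : ℤ))).filter
    (fun p => p.1 < p.2 ∧ σ p.2 < σ p.1)) with hS2
  have hmemS1 : ∀ r : ℤ × ℤ, r ∈ S1 ↔ ((1 ≤ r.1 ∧ r.1 ≤ M) ∧ (1 ≤ r.2 ∧ r.2 ≤ M)) ∧
      r.1 < r.2 ∧ σ (t r.2) < σ (t r.1) := by
    intro r
    rw [hS1, Finset.mem_filter]
    simp only [Finset.mem_product, Finset.mem_Icc, Equiv.Perm.mul_apply]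
    rfl
  have hmemS2 : ∀ r : ℤ × ℤ, r ∈ S2 ↔ ((1 ≤ r.1 ∧ r.1 ≤ M) ∧ (1 ≤ r.2 ∧ r.2 ≤ M)) ∧
      r.1 < r.2 ∧ σ r.2 < σ r.1 := by
    intro r
    rw [hS2]
    simp only [Finset.mem_filter, Finset.mem_product, Finset.mem_Icc]
  have h1 : (jz, jz+1) ∈ S1 := by
    rw [hmemS1]
    dsimp only
    have e1 : t (jz+1) = jz := by rw [ht (jz+1) (by omega)]; split_ifs <;> omega
    have e2 : t jz = jz+1 := by rw [ht jz (by omega)]; split_ifs <;> omega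
    refine ⟨⟨⟨by omega, by omega⟩, ⟨by omega, by omega⟩⟩, by omega, ?_⟩
    show σ (t (jz+1)) < σ (t jz)
    rw [e1, e2]; exact hlt
  have h2 : (jz, jz+1) ∉ S2 := by
    rw [hmemS2]
    dsimp only
    rintro ⟨-, -, hc⟩
    omega
  have hcard : (S1.erase (jz, jz+1)).card = (S2.erase (jz, jz+1)).card := by
    apply Finset.card_bij' (i := fun r _ => (t r.1, t r.2)) (j := fun r _ => (t r.1, t r.2))
    · intro r hr
      rw [Finset.mem_erase, hmemS1] at hr
      obtain ⟨hne, ⟨⟨ha1, ha2⟩, ⟨hb1, hb2⟩⟩, hord, hcond⟩ := hr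
      have hnot : ¬(r.1 = jz ∧ r.2 = jz+1) := by
        rintro ⟨u1, u2⟩
        exact hne (Prod.ext u1 u2)
      rw [Finset.mem_erase, hmemS2]
      refine ⟨?_, ⟨htmem r.1 ha1 ha2, htmem r.2 hb1 hb2⟩, ?_, hcond⟩
      · intro hcontra
        rw [Prod.mk.injEq] at hcontra
        obtain ⟨e1, e2⟩ := hcontra
        rw [ht r.1 ha1] at e1
        rw [ht r.2 hb1] at e2
        split_ifs at e1 <;> split_ifs at e2 <;> omega
      · rw [ht r.1 ha1, ht r.2 hb1]
        split_ifs <;> omega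
    · intro r hr
      rw [Finset.mem_erase, hmemS2] at hr
      obtain ⟨hne, ⟨⟨ha1, ha2⟩, ⟨hb1, hb2⟩⟩, hord, hcond⟩ := hr
      have hnot : ¬(r.1 = jz ∧ r.2 = jz+1) := by
        rintro ⟨u1, u2⟩
        exact hne (Prod.ext u1 u2)
      rw [Finset.mem_erase, hmemS1]
      refine ⟨?_, ⟨htmem r.1 ha1 ha2, htmem r.2 hb1 hb2⟩, ?_, ?_⟩
      · intro hcontra
        rw [Prod.mk.injEq] at hcontra
        obtain ⟨e1, e2⟩ := hcontra
        rw [ht r.1 ha1] at e1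
        rw [ht r.2 hb1] at e2
        split_ifs at e1 <;> split_ifs at e2 <;> omega
      · rw [ht r.1 ha1, ht r.2 hb1]
        split_ifs <;> omega
      · show σ (t (t r.2)) < σ (t (t r.1))
        rw [htt, htt]; exact hcond
    · intro r _; exact Prod.ext (htt r.1) (htt r.2)
    · intro r _; exact Prod.ext (htt r.1) (htt r.2)
  have e1 : invStat M (σ * s j) = S1.card := rfl
  have e2 : invStat M σ = S2.card := rfl
  rw [e1, e2, ← Finset.card_erase_add_one h1, hcard, Finset.erase_eq_of_notMem h2]

lemma invStat_mul_s_gt (hj : j ≠ 0) (hjM : (j:ℤ) + 1 ≤ (M:ℤ))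
    (hgt : σ ((j:ℤ)+1) < σ (j:ℤ)) :
    invStat M σ = invStat M (σ * s j) + 1 := by
  have hj1 : (1:ℤ) ≤ (j:ℤ) := by exact_mod_cast Nat.one_le_iff_ne_zero.mpr hj
  have e1 : s j (j:ℤ) = (j:ℤ)+1 := by rw [sval j hj (by omega)]; split_ifs <;> omega
  have e2 : s j ((j:ℤ)+1) = (j:ℤ) := by rw [sval j hj (by omega)]; split_ifs <;> omega
  have key := invStat_mul_s_lt M (σ * s j) j hj hjM (by
    simp only [Equiv.Perm.mul_apply, e1, e2]; exact hgt)
  rw [mul_assoc, s_mul_self j hj, mul_one] at key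
  omega

end swap


section delb

variable (M : ℕ) (σ : Equiv.Perm ℤ) (j : ℕ)

lemma delB_mem (k : ℤ) :
    k ∈ ((Finset.Icc (2 : ℤ) (M : ℤ)).filter
      (fun k => ∀ i ∈ Finset.Icc (1 : ℤ) (M : ℤ), i < k → σ k < σ i)) ↔
    (2 ≤ k ∧ k ≤ M) ∧ ∀ i : ℤ, 1 ≤ i → i ≤ M → i < k → σ k < σ i := by
  simp only [Finset.mem_filter, Finset.mem_Icc]
  tauto

lemma delB_off (hj : j ≠ 0) (hjM : (j:ℤ) + 1 ≤ (M:ℤ)) {k : ℤ} (h1 : k ≠ (j:ℤ))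
    (h2 : k ≠ (j:ℤ)+1) (hk1 : 1 ≤ k) :
    (∀ i : ℤ, 1 ≤ i → i ≤ M → i < k → (σ * s j) k < (σ * s j) i) ↔
    (∀ i : ℤ, 1 ≤ i → i ≤ M → i < k → σ k < σ i) := by
  have hj1 : (1:ℤ) ≤ (j:ℤ) := by exact_mod_cast Nat.one_le_iff_ne_zero.mpr hj
  have hsk : (σ * s j) k = σ k := by
    simp only [Equiv.Perm.mul_apply]
    rw [sval j hj hk1]
    split_ifs <;> first | omega | rfl
  have key : ∀ i : ℤ, 1 ≤ i → i ≤ M → i < k → (1 ≤ s j i ∧ s j i ≤ M ∧ s j i < k) := by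
    intro i hi1 hiM hik
    rw [sval j hj hi1]
    split_ifs <;> omega
  constructor
  · intro h i hi1 hiM hik
    obtain ⟨ha, hb, hc⟩ := key i hi1 hiM hik
    have := h (s j i) ha hb hc
    rw [hsk] at this
    simpa only [Equiv.Perm.mul_apply, s_invol j hj] using this
  · intro h i hi1 hiM hik
    rw [hsk]
    obtain ⟨ha, hb, hc⟩ := key i hi1 hiM hik
    simpa only [Equiv.Perm.mul_apply] using h (s j i) ha hb hc

lemma delB_mul_s1_lt (hM : 2 ≤ (M:ℤ)) (hlt : σ 1 < σ 2) :
    delB M (σ * s 1) = delB M σ + 1 := by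
  have h1ne : (1:ℕ) ≠ 0 := one_ne_zero
  have hs1 : s 1 (1:ℤ) = 2 := by rw [sval 1 h1ne (by omega)]; norm_num
  have hs2 : s 1 (2:ℤ) = 1 := by rw [sval 1 h1ne (by omega)]; norm_num
  set D1 := ((Finset.Icc (2 : ℤ) (M : ℤ)).filter
      (fun k => ∀ i ∈ Finset.Icc (1 : ℤ) (M : ℤ), i < k → (σ * s 1) k < (σ * s 1) i)) with hD1
  set D2 := ((Finset.Icc (2 : ℤ) (M : ℤ)).filter
      (fun k => ∀ i ∈ Finset.Icc (1 : ℤ) (M : ℤ), i < k → σ k < σ i)) with hD2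
  have h2notin : (2:ℤ) ∉ D2 := by
    rw [hD2, delB_mem]
    rintro ⟨-, hc⟩
    have := hc 1 (by omega) (by omega) (by omega)
    omega
  have hseteq : D1 = insert 2 D2 := by
    ext k
    rw [Finset.mem_insert, hD1, hD2, delB_mem, delB_mem]
    constructor
    · rintro ⟨⟨hk2, hkM⟩, hcond⟩
      by_cases hk : k = 2
      · exact Or.inl hk
      · refine Or.inr ⟨⟨hk2, hkM⟩, ?_⟩
        exact (delB_off M σ 1 h1ne (by omega) (by omega) (by omega) (by omega)).mp hcond
    · rintro (hk | ⟨⟨hk2, hkM⟩, hcond⟩)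
      · subst hk
        refine ⟨⟨le_refl _, hM⟩, ?_⟩
        intro i hi1 hiM hik
        have hi : i = 1 := by omega
        subst hi
        simp only [Equiv.Perm.mul_apply, hs1, hs2]
        exact hlt
      · by_cases hk : k = 2
        · subst hk
          exact absurd (by rw [hD2, delB_mem]; exact ⟨⟨hk2, hkM⟩, hcond⟩) h2notin
        · refine ⟨⟨hk2, hkM⟩, ?_⟩
          exact (delB_off M σ 1 h1ne (by omega) (by omega) (by omega) (by omega)).mpr hcond
  have : delB M (σ * s 1) = D1.card := rfl
  have e2 : delB M σ = D2.card := rfl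
  rw [this, hseteq, Finset.card_insert_of_notMem h2notin, e2]

lemma delB_mul_s1_gt (hM : 2 ≤ (M:ℤ)) (hgt : σ 2 < σ 1) :
    delB M σ = delB M (σ * s 1) + 1 := by
  have h1ne : (1:ℕ) ≠ 0 := one_ne_zero
  have hs1 : s 1 (1:ℤ) = 2 := by rw [sval 1 h1ne (by omega)]; norm_num
  have hs2 : s 1 (2:ℤ) = 1 := by rw [sval 1 h1ne (by omega)]; norm_num
  have key := delB_mul_s1_lt M (σ * s 1) hM (by
    simp only [Equiv.Perm.mul_apply, hs1, hs2]; exact hgt)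
  rw [mul_assoc, s_mul_self 1 h1ne, mul_one] at key
  omega

lemma delB_mul_s_ge (hj2 : 2 ≤ j) (hjM : (j:ℤ) + 1 ≤ (M:ℤ))
    (hgt : σ ((j:ℤ)+1) < σ (j:ℤ)) :
    delB M σ ≤ delB M (σ * s j) + 1 := by
  have hj : j ≠ 0 := by omega
  have hj2' : (2:ℤ) ≤ (j:ℤ) := by exact_mod_cast hj2
  have hsjj : s j (j:ℤ) = (j:ℤ)+1 := by rw [sval j hj (by omega)]; split_ifs <;> omega
  have hsjj1 : s j ((j:ℤ)+1) = (j:ℤ) := by rw [sval j hj (by omega)]; split_ifs <;> omega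
  set D2 := ((Finset.Icc (2 : ℤ) (M : ℤ)).filter
      (fun k => ∀ i ∈ Finset.Icc (1 : ℤ) (M : ℤ), i < k → σ k < σ i)) with hD2
  set D1 := ((Finset.Icc (2 : ℤ) (M : ℤ)).filter
      (fun k => ∀ i ∈ Finset.Icc (1 : ℤ) (M : ℤ), i < k → (σ * s j) k < (σ * s j) i)) with hD1
  have hinj : (D2.erase (j:ℤ)).card ≤ D1.card := by
    apply Finset.card_le_card_of_injOn (fun k => if k = (j:ℤ)+1 then (j:ℤ) else k)
    · intro k hk
      rw [Finset.mem_coe, Finset.mem_erase, hD2, delB_mem] at hk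
      simp only [Finset.mem_coe]
      obtain ⟨hne, ⟨hk2, hkM⟩, hcond⟩ := hk
      by_cases hkj1 : k = (j:ℤ)+1
      · subst hkj1
        rw [if_pos rfl, hD1, delB_mem]
        refine ⟨⟨by omega, by omega⟩, ?_⟩
        intro i hi1 hiM hij
        have hsi : s j i = i := by rw [sval j hj hi1]; split_ifs <;> omega
        simp only [Equiv.Perm.mul_apply, hsjj, hsi]
        exact hcond i hi1 hiM (by omega)
      · rw [if_neg hkj1, hD1, delB_mem]
        refine ⟨⟨hk2, hkM⟩, ?_⟩
        exact (delB_off M σ j hj hjM hne hkj1 (by omega)).mpr hcond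
    · intro k hk k' hk' hf
      simp only at hf
      rw [Finset.coe_erase, Set.mem_diff] at hk hk'
      have hkne : k ≠ (j:ℤ) := by simpa using hk.2
      have hkne' : k' ≠ (j:ℤ) := by simpa using hk'.2
      split_ifs at hf <;> omega
  have hcard : delB M σ ≤ (D2.erase (j:ℤ)).card + 1 := by
    have := Finset.card_erase_add_one (a := (j:ℤ)) (s := D2)
    by_cases hmem : (j:ℤ) ∈ D2
    · have := this hmem
      have e : delB M σ = D2.card := rfl
      omega
    · rw [Finset.erase_eq_of_notMem hmem]
      have e : delB M σ = D2.card := rfl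
      omega
  have e1 : delB M (σ * s j) = D1.card := rfl
  omega

lemma delB_mul_s_add (hj2 : 2 ≤ j) (hjM : (j:ℤ) + 1 ≤ (M:ℤ))
    (hlt : σ (j:ℤ) < σ ((j:ℤ)+1))
    (hmlt : ∀ i : ℤ, 1 ≤ i → i ≤ M → i < (j:ℤ) → σ ((j:ℤ)+1) < σ i) :
    delB M σ + 1 ≤ delB M (σ * s j) := by
  have hj : j ≠ 0 := by omega
  have hj2' : (2:ℤ) ≤ (j:ℤ) := by exact_mod_cast hj2
  have hsjj : s j (j:ℤ) = (j:ℤ)+1 := by rw [sval j hj (by omega)]; split_ifs <;> omega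
  have hsjj1 : s j ((j:ℤ)+1) = (j:ℤ) := by rw [sval j hj (by omega)]; split_ifs <;> omega
  set D2 := ((Finset.Icc (2 : ℤ) (M : ℤ)).filter
      (fun k => ∀ i ∈ Finset.Icc (1 : ℤ) (M : ℤ), i < k → σ k < σ i)) with hD2
  set D1 := ((Finset.Icc (2 : ℤ) (M : ℤ)).filter
      (fun k => ∀ i ∈ Finset.Icc (1 : ℤ) (M : ℤ), i < k → (σ * s j) k < (σ * s j) i)) with hD1
  have hnotin : ((j:ℤ)+1) ∉ D2 := by
    rw [hD2, delB_mem]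
    rintro ⟨-, hc⟩
    have := hc (j:ℤ) (by omega) (by omega) (by omega)
    omega
  have hsub : insert ((j:ℤ)+1) D2 ⊆ D1 := by
    intro k hk
    rw [Finset.mem_insert, hD2, delB_mem] at hk
    rw [hD1, delB_mem]
    rcases hk with hk | ⟨⟨hk2, hkM⟩, hcond⟩
    · subst hk
      refine ⟨⟨by omega, by omega⟩, ?_⟩
      intro i hi1 hiM hik
      by_cases hij : i = (j:ℤ)
      · subst hij
        simp only [Equiv.Perm.mul_apply, hsjj, hsjj1]
        exact hlt
      · have hsi : s j i = i := by rw [sval j hj hi1]; split_ifs <;> omega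
        simp only [Equiv.Perm.mul_apply, hsjj1, hsi]
        exact lt_trans hlt (hmlt i hi1 hiM (by omega))
    · by_cases hkj1 : k = (j:ℤ)+1
      · exact absurd (by rw [hD2, delB_mem]; exact ⟨⟨hk2, hkM⟩, hcond⟩) (hkj1 ▸ hnotin)
      · by_cases hkj : k = (j:ℤ)
        · subst hkj
          refine ⟨⟨hk2, hkM⟩, ?_⟩
          intro i hi1 hiM hik
          have hsi : s j i = i := by rw [sval j hj hi1]; split_ifs <;> omega
          simp only [Equiv.Perm.mul_apply, hsjj, hsi]
          exact hmlt i hi1 hiM hik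
        · refine ⟨⟨hk2, hkM⟩, ?_⟩
          exact (delB_off M σ j hj hjM hkj hkj1 (by omega)).mpr hcond
  have hc1 : (insert ((j:ℤ)+1) D2).card = D2.card + 1 := Finset.card_insert_of_notMem hnotin
  have hc2 := Finset.card_le_card hsub
  have e1 : delB M (σ * s j) = D1.card := rfl
  have e2 : delB M σ = D2.card := rfl
  omega

end delb


section steps

lemma F_step (M : ℕ) (τ : Equiv.Perm ℤ) (j : ℕ) (hj2 : 2 ≤ j) (hjM : (j:ℤ)+1 ≤ (M:ℤ))
    (hbad : τ ((j:ℤ)+1) < τ (j:ℤ) ∨ (τ (j:ℤ) < τ ((j:ℤ)+1) ∧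
      ∀ i : ℤ, 1 ≤ i → i ≤ (M:ℤ) → i < (j:ℤ) → τ ((j:ℤ)+1) < τ i)) :
    (invStat M (τ * s j) : ℤ) - delB M (τ * s j) ≤ (invStat M τ : ℤ) - delB M τ := by
  rcases hbad with h | ⟨h1, h2⟩
  · have hi := invStat_mul_s_gt M τ j (by omega) hjM h
    have hd := delB_mul_s_ge M τ j hj2 hjM h
    omega
  · have hi := invStat_mul_s_lt M τ j (by omega) hjM h1
    have hd := delB_mul_s_add M τ j hj2 hjM h1 h2
    omega

lemma F_s1 (M : ℕ) (σ : Equiv.Perm ℤ) (hM : 2 ≤ (M:ℤ)) (hne : σ 1 ≠ σ 2) :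
    (invStat M (σ * s 1) : ℤ) - delB M (σ * s 1) = (invStat M σ : ℤ) - delB M σ := by
  rcases hne.lt_or_gt with h | h
  · have hi := invStat_mul_s_lt M σ 1 one_ne_zero (by omega) (by simpa using h)
    have hd := delB_mul_s1_lt M σ hM h
    omega
  · have hi := invStat_mul_s_gt M σ 1 one_ne_zero (by omega) (by simpa using h)
    have hd := delB_mul_s1_gt M σ hM h
    omega

lemma ts_val1 (σ : Equiv.Perm ℤ) : (σ * s 1) 1 = σ 2 := by
  simp only [Equiv.Perm.mul_apply]
  rw [sval 1 one_ne_zero (by norm_num)]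
  push_cast
  rfl

lemma ts_val2 (σ : Equiv.Perm ℤ) : (σ * s 1) 2 = σ 1 := by
  simp only [Equiv.Perm.mul_apply]
  rw [sval 1 one_ne_zero (by norm_num : (1:ℤ) ≤ 2)]
  push_cast
  rfl

lemma ts_val3 (σ : Equiv.Perm ℤ) {z : ℤ} (hz : 3 ≤ z) : (σ * s 1) z = σ z := by
  simp only [Equiv.Perm.mul_apply]
  rw [sval 1 one_ne_zero (by omega)]
  push_cast
  rw [if_neg (by omega), if_neg (by omega)]

lemma ell_step (n : ℕ) (σ : Equiv.Perm ℤ) (i : ℕ) (hi1 : 1 ≤ i) (hin : (i:ℤ) + 2 ≤ (n:ℤ)+1)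
    (hne12 : σ 1 ≠ σ 2)
    (hbad : (σ * s 1) ((i:ℤ)+2) < (σ * s 1) ((i:ℤ)+1) ∨
      ((σ * s 1) ((i:ℤ)+1) < (σ * s 1) ((i:ℤ)+2) ∧
        ∀ z : ℤ, 1 ≤ z → z ≤ (n:ℤ)+1 → z < (i:ℤ)+1 → (σ * s 1) ((i:ℤ)+2) < (σ * s 1) z)) :
    ellL (n+1) (σ * a i) ≤ ellL (n+1) σ := by
  have hfact : σ * a i = (σ * s 1) * s (i+1) := by
    rw [a, if_neg (by omega : i ≠ 0), ← mul_assoc]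
  have hns : negSum (n+1) (σ * a i)⁻¹ = negSum (n+1) σ⁻¹ :=
    negSum_mul (sp_a i (by omega)) (n+1) σ
  have hFS := F_step (n+1) (σ * s 1) (i+1) (by omega) (by push_cast; omega)
  push_cast at hFS
  have hFS2 := hFS (by push_cast; exact hbad)
  have hF1 := F_s1 (n+1) σ (by push_cast; omega) hne12
  unfold ellL
  rw [hns, hfact]
  push_cast
  push_cast at hFS2 hF1
  linarith

lemma chain_of_desA (n : ℕ) (σ : Equiv.Perm ℤ) (hn : 2 ≤ n) (hdes : desA n σ = 0)
    (hne12 : σ 1 ≠ σ 2) (hne13 : σ 1 ≠ σ 3) (hne23 : σ 2 ≠ σ 3)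
    (hinj : ∀ x y : ℤ, x ≠ y → σ x ≠ σ y) :
    (∀ k : ℤ, 2 ≤ k → k ≤ (n:ℤ) → σ k < σ (k+1)) ∧ σ 1 < σ 3 := by
  have hempty : desASet n σ = ∅ := Finset.card_eq_zero.mp hdes
  have hfree : ∀ i : ℕ, 1 ≤ i → i ≤ n - 1 → ¬ (ellL (n+1) (σ * a i) ≤ ellL (n+1) σ) := by
    intro i h1 h2 hc
    have hmem : i ∈ desASet n σ := by
      rw [desASet, Finset.mem_filter, Finset.mem_Icc]
      exact ⟨⟨h1, h2⟩, hc⟩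
    rw [hempty] at hmem
    exact absurd hmem (Finset.notMem_empty i)
  have e1 := ts_val1 σ
  have e2 := ts_val2 σ
  have h13 : σ 1 < σ 3 := by
    by_contra hcon
    have h31 : σ 3 < σ 1 := by
      rcases lt_trichotomy (σ 1) (σ 3) with h | h | h
      · exact absurd h hcon
      · exact absurd h hne13
      · exact h
    refine hfree 1 le_rfl (by omega) (ell_step n σ 1 le_rfl (by omega) hne12 ?_)
    left
    simp only [Nat.cast_one]
    have e3 : (σ * s 1) (1+2 : ℤ) = σ 3 := by rw [ts_val3 σ (by norm_num)]; norm_num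
    have e2' : (σ * s 1) (1+1 : ℤ) = σ 1 := by rw [show (1+1 : ℤ) = 2 by norm_num, e2]
    rw [e3, e2']
    exact h31
  have h23 : σ 2 < σ 3 := by
    by_contra hcon
    have h32 : σ 3 < σ 2 := by
      rcases lt_trichotomy (σ 2) (σ 3) with h | h | h
      · exact absurd h hcon
      · exact absurd h hne23
      · exact h
    refine hfree 1 le_rfl (by omega) (ell_step n σ 1 le_rfl (by omega) hne12 ?_)
    right
    simp only [Nat.cast_one]
    have e3 : (σ * s 1) (1+2 : ℤ) = σ 3 := by rw [ts_val3 σ (by norm_num)]; norm_num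
    have e2' : (σ * s 1) (1+1 : ℤ) = σ 1 := by rw [show (1+1 : ℤ) = 2 by norm_num, e2]
    refine ⟨by rw [e3, e2']; exact h13, ?_⟩
    intro z hz1 hzn hz2
    have hz : z = 1 := by omega
    subst hz
    rw [e3, e1]
    exact h32
  refine ⟨?_, h13⟩
  intro k hk2 hkn
  by_cases hk : k = 2
  · subst hk; norm_num; exact h23
  · have hk3 : 3 ≤ k := by omega
    by_contra hcon
    have hgt : σ (k+1) < σ k := by
      rcases lt_trichotomy (σ k) (σ (k+1)) with h | h | h
      · exact absurd h hcon
      · exact absurd h (hinj k (k+1) (by omega))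
      · exact h
    set i : ℕ := (k-1).toNat with hidf
    have hicast : (i:ℤ) = k - 1 := by omega
    refine hfree i (by omega) (by omega) (ell_step n σ i (by omega) (by omega) hne12 ?_)
    left
    have ea : (σ * s 1) ((i:ℤ)+2) = σ (k+1) := by
      rw [show (i:ℤ)+2 = k+1 by omega, ts_val3 σ (by omega)]
    have eb : (σ * s 1) ((i:ℤ)+1) = σ k := by
      rw [show (i:ℤ)+1 = k by omega, ts_val3 σ (by omega)]
    rw [ea, eb]
    exact hgt

end steps


section core

lemma mono_chain (M : ℕ) (g : ℤ → ℤ)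
    (hg : ∀ k : ℤ, 1 ≤ k → k + 1 ≤ (M:ℤ) → g k < g (k+1)) :
    ∀ x y : ℤ, 1 ≤ x → y ≤ (M:ℤ) → x < y → g x < g y := by
  intro x y hx hy hxy
  have H : ∀ z : ℤ, x + 1 ≤ z → z ≤ (M:ℤ) → g x < g z := by
    intro z hz
    refine Int.le_induction (motive := fun w _ => w ≤ (M:ℤ) → g x < g w) ?_ ?_ z hz
    · intro hM; exact hg x hx (by omega)
    · intro w hw ih hM; exact lt_trans (ih (by omega)) (hg w (by omega) (by omega))
  exact H y (by omega) hy

lemma core (M : ℕ) (u : Equiv.Perm ℤ)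
    (hmem : ∀ x : ℤ, 1 ≤ x → x ≤ (M:ℤ) → 1 ≤ u x ∧ u x ≤ (M:ℤ))
    (p q : ℤ) (hp1 : 1 ≤ p) (hpM : p ≤ (M:ℤ)) (hq1 : 1 ≤ q) (hqM : q ≤ (M:ℤ))
    (hup : u p = 1) (huq : u q = 2) (hpq : p < q) :
    invStat M (Equiv.swap 1 2 * u) = invStat M u + 1 ∧
    delB M (Equiv.swap 1 2 * u) = delB M u + 1 := by
  set c : Equiv.Perm ℤ := Equiv.swap 1 2 with hc
  have kc : ∀ x : ℤ, 1 ≤ x → x ≤ (M:ℤ) →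
      ((x = p ∧ u x = 1 ∧ c (u x) = 2) ∨ (x = q ∧ u x = 2 ∧ c (u x) = 1) ∨
       (x ≠ p ∧ x ≠ q ∧ 3 ≤ u x ∧ u x ≤ (M:ℤ) ∧ c (u x) = u x)) := by
    intro x h1 h2
    by_cases e1 : x = p
    · subst e1; exact Or.inl ⟨rfl, hup, by rw [hup]; exact Equiv.swap_apply_left 1 2⟩
    by_cases e2 : x = q
    · subst e2; exact Or.inr (Or.inl ⟨rfl, huq, by rw [huq]; exact Equiv.swap_apply_right 1 2⟩)
    · have hb := hmem x h1 h2
      have hx1 : u x ≠ 1 := fun h => e1 (u.injective (h.trans hup.symm))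
      have hx2 : u x ≠ 2 := fun h => e2 (u.injective (h.trans huq.symm))
      exact Or.inr (Or.inr ⟨e1, e2, by omega, hb.2,
        Equiv.swap_apply_of_ne_of_ne hx1 hx2⟩)
  constructor
  · -- invStat part
    set S1 := (((Finset.Icc (1 : ℤ) (M : ℤ)) ×ˢ (Finset.Icc (1 : ℤ) (M : ℤ))).filter
      (fun r => r.1 < r.2 ∧ (c * u) r.2 < (c * u) r.1)) with hS1
    set S2 := (((Finset.Icc (1 : ℤ) (M : ℤ)) ×ˢ (Finset.Icc (1 : ℤ) (M : ℤ))).filter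
      (fun r => r.1 < r.2 ∧ u r.2 < u r.1)) with hS2
    have hmemS1 : ∀ r : ℤ × ℤ, r ∈ S1 ↔ ((1 ≤ r.1 ∧ r.1 ≤ (M:ℤ)) ∧ (1 ≤ r.2 ∧ r.2 ≤ (M:ℤ))) ∧
        r.1 < r.2 ∧ c (u r.2) < c (u r.1) := by
      intro r
      rw [hS1, Finset.mem_filter]
      simp only [Finset.mem_product, Finset.mem_Icc, Equiv.Perm.mul_apply]
    have hmemS2 : ∀ r : ℤ × ℤ, r ∈ S2 ↔ ((1 ≤ r.1 ∧ r.1 ≤ (M:ℤ)) ∧ (1 ≤ r.2 ∧ r.2 ≤ (M:ℤ))) ∧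
        r.1 < r.2 ∧ u r.2 < u r.1 := by
      intro r
      rw [hS2]
      simp only [Finset.mem_filter, Finset.mem_product, Finset.mem_Icc]
    have hnotin : (p, q) ∉ S2 := by
      rw [hmemS2]
      rintro ⟨-, -, hcnd⟩
      simp only [hup, huq] at hcnd
      omega
    have hseteq : S1 = insert (p, q) S2 := by
      ext r
      rw [Finset.mem_insert, hmemS1, hmemS2, Prod.ext_iff]
      constructor
      · rintro ⟨⟨⟨ha1, ha2⟩, ⟨hb1, hb2⟩⟩, hord, hcnd⟩
        have kc1 := kc r.1 ha1 ha2
        have kc2 := kc r.2 hb1 hb2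
        rcases kc1 with ⟨f1, f2, f3⟩ | ⟨f1, f2, f3⟩ | ⟨f1, f2, f3, f4, f5⟩ <;>
          rcases kc2 with ⟨g1, g2, g3⟩ | ⟨g1, g2, g3⟩ | ⟨g1, g2, g3, g4, g5⟩ <;>
          omega
      · rintro (⟨h1, h2⟩ | ⟨⟨⟨ha1, ha2⟩, ⟨hb1, hb2⟩⟩, hord, hcnd⟩)
        · have kc1 := kc r.1 (by omega) (by omega)
          have kc2 := kc r.2 (by omega) (by omega)
          rcases kc1 with ⟨f1, f2, f3⟩ | ⟨f1, f2, f3⟩ | ⟨f1, f2, f3, f4, f5⟩ <;>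
            rcases kc2 with ⟨g1, g2, g3⟩ | ⟨g1, g2, g3⟩ | ⟨g1, g2, g3, g4, g5⟩ <;>
            omega
        · have kc1 := kc r.1 ha1 ha2
          have kc2 := kc r.2 hb1 hb2
          rcases kc1 with ⟨f1, f2, f3⟩ | ⟨f1, f2, f3⟩ | ⟨f1, f2, f3, f4, f5⟩ <;>
            rcases kc2 with ⟨g1, g2, g3⟩ | ⟨g1, g2, g3⟩ | ⟨g1, g2, g3, g4, g5⟩ <;>
            omega
    have e1 : invStat M (c * u) = S1.card := rfl
    have e2 : invStat M u = S2.card := rfl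
    rw [e1, e2, hseteq, Finset.card_insert_of_notMem hnotin]
  · -- delB part
    set D1 := ((Finset.Icc (2 : ℤ) (M : ℤ)).filter
      (fun k => ∀ i ∈ Finset.Icc (1 : ℤ) (M : ℤ), i < k → (c * u) k < (c * u) i)) with hD1
    set D2 := ((Finset.Icc (2 : ℤ) (M : ℤ)).filter
      (fun k => ∀ i ∈ Finset.Icc (1 : ℤ) (M : ℤ), i < k → u k < u i)) with hD2
    have hmemD1 : ∀ k : ℤ, k ∈ D1 ↔ (2 ≤ k ∧ k ≤ (M:ℤ)) ∧
        ∀ i : ℤ, 1 ≤ i → i ≤ (M:ℤ) → i < k → c (u k) < c (u i) := by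
      intro k
      rw [hD1, Finset.mem_filter]
      simp only [Finset.mem_Icc, Equiv.Perm.mul_apply]
      tauto
    have hmemD2 : ∀ k : ℤ, k ∈ D2 ↔ (2 ≤ k ∧ k ≤ (M:ℤ)) ∧
        ∀ i : ℤ, 1 ≤ i → i ≤ (M:ℤ) → i < k → u k < u i := by
      intro k
      rw [hD2]
      simp only [Finset.mem_filter, Finset.mem_Icc]
      tauto
    have hqnotin : q ∉ D2 := by
      rw [hmemD2]
      rintro ⟨-, hcnd⟩
      have := hcnd p hp1 hpM hpq
      omega
    have hseteq : D1 = insert q D2 := by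
      ext k
      rw [Finset.mem_insert, hmemD1, hmemD2]
      constructor
      · rintro ⟨⟨hk2, hkM⟩, hcnd⟩
        have kck := kc k (by omega) hkM
        by_cases hkq : k = q
        · exact Or.inl hkq
        right
        refine ⟨⟨hk2, hkM⟩, ?_⟩
        intro i h1 h2 hik
        have kci := kc i h1 h2
        have hci := hcnd i h1 h2 hik
        rcases kck with ⟨f1, f2, f3⟩ | ⟨f1, f2, f3⟩ | ⟨f1, f2, f3, f4, f5⟩ <;>
          rcases kci with ⟨g1, g2, g3⟩ | ⟨g1, g2, g3⟩ | ⟨g1, g2, g3, g4, g5⟩ <;>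
          omega
      · rintro (hkq | ⟨⟨hk2, hkM⟩, hcnd⟩)
        · refine ⟨⟨by omega, by omega⟩, ?_⟩
          intro i h1 h2 hik
          have kci := kc i h1 h2
          have kcq := kc k (by omega) (by omega)
          rcases kcq with ⟨f1, f2, f3⟩ | ⟨f1, f2, f3⟩ | ⟨f1, f2, f3, f4, f5⟩ <;>
            rcases kci with ⟨g1, g2, g3⟩ | ⟨g1, g2, g3⟩ | ⟨g1, g2, g3, g4, g5⟩ <;>
            omega
        · refine ⟨⟨hk2, hkM⟩, ?_⟩
          intro i h1 h2 hik
          have kci := kc i h1 h2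
          have kck := kc k (by omega) hkM
          have hci := hcnd i h1 h2 hik
          rcases kck with ⟨f1, f2, f3⟩ | ⟨f1, f2, f3⟩ | ⟨f1, f2, f3, f4, f5⟩ <;>
            rcases kci with ⟨g1, g2, g3⟩ | ⟨g1, g2, g3⟩ | ⟨g1, g2, g3, g4, g5⟩ <;>
            omega
    have e1 : delB M (c * u) = D1.card := rfl
    have e2 : delB M u = D2.card := rfl
    rw [e1, e2, hseteq, Finset.card_insert_of_notMem hqnotin]

end core


/-- If `π = σu ∈ L_{n+1}` with `σ ∈ L_{n+1}` descent-free and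
`u = σ⁻¹π ∈ A_{n+1}`, then `ℓ_L(π) = ℓ_A(u) + Σ_{i ∈ Neg(π⁻¹)} i`, where
`ℓ_A(u) = inv(u) - del_S(u)`. -/
theorem ellLFactorization (n : ℕ) (π σ : Equiv.Perm ℤ) (hπ : isL (n + 1) π)
    (hσ : isL (n + 1) σ) (hdes : desA n σ = 0) (hu : isA (n + 1) (σ⁻¹ * π)) :
    ellL (n + 1) π
      = ((invStat (n + 1) (σ⁻¹ * π) : ℤ) - (delB (n + 1) (σ⁻¹ * π) : ℤ))
        + negSum (n + 1) π⁻¹ := by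
  set u : Equiv.Perm ℤ := σ⁻¹ * π with hudef
  have hπeq : π = σ * u := (mul_inv_cancel_left σ π).symm
  have huS : isS (n+1) u := hu.1
  have hσB : isB (n+1) σ := hσ.1
  have injσ : ∀ x y : ℤ, x ≠ y → σ x ≠ σ y := fun x y h hxy => h (σ.injective hxy)
  have umem : ∀ x : ℤ, 1 ≤ x → x ≤ ((n+1:ℕ):ℤ) → 1 ≤ u x ∧ u x ≤ ((n+1:ℕ):ℤ) :=
    fun x h1 h2 => isS_window huS h1 h2
  suffices hFeq : (invStat (n+1) π : ℤ) - delB (n+1) π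
      = (invStat (n+1) u : ℤ) - delB (n+1) u by
    unfold ellL
    omega
  have hchain : 2 ≤ n → ((∀ k : ℤ, 2 ≤ k → k ≤ (n:ℤ) → σ k < σ (k+1)) ∧ σ 1 < σ 3) :=
    fun hn => chain_of_desA n σ hn hdes (injσ 1 2 (by norm_num)) (injσ 1 3 (by norm_num))
      (injσ 2 3 (by norm_num)) injσ
  by_cases h12 : σ 1 < σ 2
  · -- increasing case
    have hch : ∀ k : ℤ, 1 ≤ k → k + 1 ≤ ((n+1:ℕ):ℤ) → σ k < σ (k+1) := by
      intro k h1 h2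
      by_cases hk : k = 1
      · subst hk; simpa using h12
      · have hn2 : 2 ≤ n := by omega
        exact (hchain hn2).1 k (by omega) (by omega)
    have hmono := mono_chain (n+1) (fun z => σ z) hch
    have hcmp : ∀ x y : ℤ, 1 ≤ x → x ≤ ((n+1:ℕ):ℤ) → 1 ≤ y → y ≤ ((n+1:ℕ):ℤ) →
        (σ x < σ y ↔ x < y) := by
      intro x y hx1 hx2 hy1 hy2
      constructor
      · intro h
        rcases lt_trichotomy x y with h' | h' | h'
        · exact h'
        · exfalso; rw [h'] at h; exact lt_irrefl _ h
        · exfalso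
          have := hmono y x hy1 hx2 h'
          omega
      · intro h; exact hmono x y hx1 hy2 h
    have hinv : invStat (n+1) π = invStat (n+1) u := by
      rw [hπeq]
      unfold invStat
      congr 1
      apply Finset.filter_congr
      intro r hr
      rw [Finset.mem_product, Finset.mem_Icc, Finset.mem_Icc] at hr
      obtain ⟨⟨ha1, ha2⟩, hb1, hb2⟩ := hr
      simp only [Equiv.Perm.mul_apply]
      have c2 := umem r.2 hb1 hb2
      have c1 := umem r.1 ha1 ha2
      exact and_congr_right fun _ => hcmp (u r.2) (u r.1) c2.1 c2.2 c1.1 c1.2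
    have hdel : delB (n+1) π = delB (n+1) u := by
      rw [hπeq]
      unfold delB
      congr 1
      apply Finset.filter_congr
      intro k hk
      rw [Finset.mem_Icc] at hk
      simp only [Equiv.Perm.mul_apply, Finset.mem_Icc]
      constructor
      · intro h i hi hik
        have ck := umem k (by omega) (by omega)
        have ci := umem i hi.1 hi.2
        exact (hcmp (u k) (u i) ck.1 ck.2 ci.1 ci.2).mp (h i hi hik)
      · intro h i hi hik
        have ck := umem k (by omega) (by omega)
        have ci := umem i hi.1 hi.2
        exact (hcmp (u k) (u i) ck.1 ck.2 ci.1 ci.2).mpr (h i hi hik)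
    rw [hinv, hdel]
  · -- swap case
    have h21 : σ 2 < σ 1 := by
      rcases lt_trichotomy (σ 1) (σ 2) with h | h | h
      · exact absurd h h12
      · exact absurd h (injσ 1 2 (by norm_num))
      · exact h
    have hn1 : 1 ≤ n := by
      by_contra hc
      have hn0 : n = 0 := by omega
      have hσ2 : σ 2 = 2 := hσB.2 2 (by rw [hn0]; norm_num)
      have hb := isB_abs_le hσB (i := 1) (by norm_num) (by rw [hn0]; norm_num)
      omega
    set c : Equiv.Perm ℤ := Equiv.swap 1 2 with hcdef
    have cv1 : c 1 = 2 := Equiv.swap_apply_left 1 2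
    have cv2 : c 2 = 1 := Equiv.swap_apply_right 1 2
    have cvz : ∀ z : ℤ, z ≠ 1 → z ≠ 2 → c z = z := fun z e1 e2 =>
      Equiv.swap_apply_of_ne_of_ne e1 e2
    have hcc : ∀ x : ℤ, c (c x) = x := fun x => Equiv.swap_apply_self 1 2 x
    have hcmem : ∀ x : ℤ, 1 ≤ x → x ≤ ((n+1:ℕ):ℤ) → 1 ≤ c x ∧ c x ≤ ((n+1:ℕ):ℤ) := by
      intro x h1 h2
      by_cases e1 : x = 1
      · rw [e1, cv1]; omega
      · by_cases e2 : x = 2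
        · rw [e2, cv2]; omega
        · rw [cvz x e1 e2]; omega
    have hch : ∀ k : ℤ, 1 ≤ k → k + 1 ≤ ((n+1:ℕ):ℤ) → σ (c k) < σ (c (k+1)) := by
      intro k h1 h2
      by_cases hk1 : k = 1
      · subst hk1
        rw [show (1:ℤ)+1 = 2 by norm_num, cv1, cv2]
        exact h21
      · by_cases hk2 : k = 2
        · subst hk2
          have hn2 : 2 ≤ n := by omega
          rw [show (2:ℤ)+1 = 3 by norm_num, cv2, cvz 3 (by norm_num) (by norm_num)]
          exact (hchain hn2).2
        · have hk3 : 3 ≤ k := by omega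
          have hn2 : 2 ≤ n := by omega
          rw [cvz k (by omega) (by omega), cvz (k+1) (by omega) (by omega)]
          exact (hchain hn2).1 k (by omega) (by omega)
    have hmono := mono_chain (n+1) (fun z => σ (c z)) hch
    have hcmp : ∀ x y : ℤ, 1 ≤ x → x ≤ ((n+1:ℕ):ℤ) → 1 ≤ y → y ≤ ((n+1:ℕ):ℤ) →
        (σ x < σ y ↔ c x < c y) := by
      intro x y hx1 hx2 hy1 hy2
      have hcx := hcmem x hx1 hx2
      have hcy := hcmem y hy1 hy2
      constructor
      · intro h
        rcases lt_trichotomy (c x) (c y) with h' | h' | h'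
        · exact h'
        · exfalso
          have hxy : x = y := by
            have := congrArg c h'
            rwa [hcc, hcc] at this
          rw [hxy] at h; exact lt_irrefl _ h
        · exfalso
          have := hmono (c y) (c x) hcy.1 hcx.2 h'
          simp only [hcc] at this
          omega
      · intro h'
        have := hmono (c x) (c y) hcx.1 hcy.2 h'
        simpa only [hcc] using this
    have hinv1 : invStat (n+1) π = invStat (n+1) (c * u) := by
      rw [hπeq]
      unfold invStat
      congr 1
      apply Finset.filter_congr
      intro r hr
      rw [Finset.mem_product, Finset.mem_Icc, Finset.mem_Icc] at hr
      obtain ⟨⟨ha1, ha2⟩, hb1, hb2⟩ := hr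
      simp only [Equiv.Perm.mul_apply]
      have c2 := umem r.2 hb1 hb2
      have c1 := umem r.1 ha1 ha2
      exact and_congr_right fun _ => hcmp (u r.2) (u r.1) c2.1 c2.2 c1.1 c1.2
    have hdel1 : delB (n+1) π = delB (n+1) (c * u) := by
      rw [hπeq]
      unfold delB
      congr 1
      apply Finset.filter_congr
      intro k hk
      rw [Finset.mem_Icc] at hk
      simp only [Equiv.Perm.mul_apply, Finset.mem_Icc]
      constructor
      · intro h i hi hik
        have ck := umem k (by omega) (by omega)
        have ci := umem i hi.1 hi.2
        exact (hcmp (u k) (u i) ck.1 ck.2 ci.1 ci.2).mp (h i hi hik)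
      · intro h i hi hik
        have ck := umem k (by omega) (by omega)
        have ci := umem i hi.1 hi.2
        exact (hcmp (u k) (u i) ck.1 ck.2 ci.1 ci.2).mpr (h i hi hik)
    have huInv := isS_inv huS
    have hp := isS_window huInv (i := 1) (by norm_num) (by omega)
    have hq := isS_window huInv (i := 2) (by norm_num) (by omega)
    have hup : u (u⁻¹ 1) = 1 := perm_apply_inv_self u 1
    have huq : u (u⁻¹ 2) = 2 := perm_apply_inv_self u 2
    have hne : u⁻¹ 1 ≠ u⁻¹ 2 := by
      intro h
      rw [h, huq] at hup
      exact absurd hup (by norm_num)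
    rcases lt_or_gt_of_ne hne with hlt | hgt
    · obtain ⟨hco1, hco2⟩ := core (n+1) u umem (u⁻¹ 1) (u⁻¹ 2) hp.1 hp.2 hq.1 hq.2 hup huq hlt
      rw [← hcdef] at hco1 hco2
      rw [hinv1, hdel1]
      omega
    · have hmem2 : ∀ x : ℤ, 1 ≤ x → x ≤ ((n+1:ℕ):ℤ) →
          1 ≤ (c * u) x ∧ (c * u) x ≤ ((n+1:ℕ):ℤ) := by
        intro x h1 h2
        have := umem x h1 h2
        simp only [Equiv.Perm.mul_apply]
        exact hcmem (u x) this.1 this.2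
      have e1 : (c * u) (u⁻¹ 2) = 1 := by
        simp only [Equiv.Perm.mul_apply, huq]; exact cv2
      have e2 : (c * u) (u⁻¹ 1) = 2 := by
        simp only [Equiv.Perm.mul_apply, hup]; exact cv1
      obtain ⟨hco1, hco2⟩ := core (n+1) (c * u) hmem2 (u⁻¹ 2) (u⁻¹ 1) hq.1 hq.2 hp.1 hp.2
        e1 e2 hgt
      rw [← hcdef] at hco1 hco2
      have hccu : c * (c * u) = u := by
        rw [hcdef, ← mul_assoc, Equiv.swap_mul_self, one_mul]
      rw [hccu] at hco1 hco2
      rw [hinv1, hdel1]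
      omega


end SignedEven
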